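/- Tighter telescoped form of Lemma 1: under the stated noisy-oracle and conflict-aware greedy assumptions, the set V_K produced after K greedy steps satisfies f(V_K) ≥ (1 − 1/e) · f(V*) − Σ_{t=1}^{K} (1 − 1/K)^{K−t} · (2·ε_t + 2·λ·γ_t); in particular, since each weight (1 − 1/K)^{K−t} ≤ 1 and each error term 2·ε_t + 2·λ·γ_t ≥ 0, this discounted error sum is at most the undiscounted sum Σ_{t=1}^{K} (2·ε_t + 2·λ·γ_t). -/

import Mathlib

lemma subadd_aux {V : Type*} [DecidableEq V] (f : Finset V → ℝ)
    (hmono : ∀ A B : Finset V, A ⊆ B → f A ≤ f B)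
    (hsub : ∀ A B : Finset V, A ⊆ B → ∀ v : V, v ∉ B →
      f (insert v B) - f B ≤ f (insert v A) - f A)
    (S T : Finset V) :
    f (S ∪ T) ≤ f S + ∑ v ∈ T, (f (insert v S) - f S) := by
  classical
  induction T using Finset.induction_on with
  | empty => simp
  | @insert a T ha ih =>
    rw [Finset.union_insert, Finset.sum_insert ha]
    by_cases h : a ∈ S ∪ T
    · rw [Finset.insert_eq_self.mpr h]
      have h0 : 0 ≤ f (insert a S) - f S :=
        sub_nonneg.mpr (hmono _ _ (Finset.subset_insert _ _))
      linarith
    · have := hsub S (S ∪ T) Finset.subset_union_left a h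
      linarith

/-- Tighter telescoped form of Lemma 1: under the stated noisy-oracle and
conflict-aware greedy assumptions, the set `V_K` produced after `K` greedy
steps satisfies
`f(V_K) ≥ (1 − 1/e) · f(V*) − Σ_{t=1}^{K} (1 − 1/K)^{K−t} · (2·ε_t + 2·λ·γ_t)`;
moreover the discounted error sum is at most the undiscounted sum
`Σ_{t=1}^{K} (2·ε_t + 2·λ·γ_t)`. -/
theorem stmt_4
    {V : Type*} [Fintype V] [DecidableEq V]
    (f : Finset V → ℝ)
    (hmono : ∀ A B : Finset V, A ⊆ B → f A ≤ f B)
    (hsub : ∀ A B : Finset V, A ⊆ B → ∀ v : V, v ∉ B →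
      f (insert v B) - f B ≤ f (insert v A) - f A)
    (hnorm : f ∅ = 0)
    (K : ℕ) (hK : 1 ≤ K)
    (Vopt : Finset V) (hopt : Vopt.card ≤ K)
    (u : ℕ → V) (Vt : ℕ → Finset V)
    (hV0 : Vt 0 = ∅)
    (hVstep : ∀ t ∈ Finset.Icc 1 K, Vt t = insert (u t) (Vt (t - 1)))
    (G L : ℕ → V → ℝ) (ε : ℕ → ℝ) (η lam : ℝ)
    (hLnn : ∀ t ∈ Finset.Icc 1 K, ∀ v : V, 0 ≤ L t v)
    (hεnn : ∀ t ∈ Finset.Icc 1 K, 0 ≤ ε t)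
    (hηnn : 0 ≤ η)
    (hproxy : ∀ t ∈ Finset.Icc 1 K, ∀ v : V,
      |G t v - (f (insert v (Vt (t - 1))) - f (Vt (t - 1)))| ≤ ε t + η * L t v)
    (hlam : η ≤ lam)
    (hgreedy : ∀ t ∈ Finset.Icc 1 K, ∀ v : V,
      G t v - lam * L t v ≤ G t (u t) - lam * L t (u t))
    (vstar : ℕ → V)
    (hstar : ∀ t ∈ Finset.Icc 1 K, ∀ v : V,
      f (insert v (Vt (t - 1))) - f (Vt (t - 1)) ≤
        f (insert (vstar t) (Vt (t - 1))) - f (Vt (t - 1))) :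
    f (Vt K) ≥ (1 - (Real.exp 1)⁻¹) * f Vopt
      - ∑ t ∈ Finset.Icc 1 K,
          (1 - 1 / (K : ℝ)) ^ (K - t) * (2 * ε t + 2 * lam * L t (vstar t)) ∧
    ∑ t ∈ Finset.Icc 1 K,
        (1 - 1 / (K : ℝ)) ^ (K - t) * (2 * ε t + 2 * lam * L t (vstar t)) ≤
      ∑ t ∈ Finset.Icc 1 K, (2 * ε t + 2 * lam * L t (vstar t)) := by
  have hlam0 : (0:ℝ) ≤ lam := le_trans hηnn hlam
  have hKpos : (0:ℝ) < (K:ℝ) := by exact_mod_cast Nat.lt_of_lt_of_le Nat.zero_lt_one hK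
  set c : ℝ := 1 - 1 / (K:ℝ) with hc
  have hc0 : 0 ≤ c := by
    have h : 1 / (K:ℝ) ≤ 1 := by
      rw [div_le_one hKpos]; exact_mod_cast hK
    rw [hc]; linarith
  have hc1 : c ≤ 1 := by
    have : 0 ≤ 1 / (K:ℝ) := by positivity
    rw [hc]; linarith
  have henn : ∀ t ∈ Finset.Icc 1 K, 0 ≤ 2 * ε t + 2 * lam * L t (vstar t) := by
    intro t ht
    have := hεnn t ht
    have := hLnn t ht (vstar t)
    nlinarith
  -- per-step inequality
  have hstep : ∀ t ∈ Finset.Icc 1 K,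
      f Vopt - f (Vt t) ≤ c * (f Vopt - f (Vt (t - 1)))
        + (2 * ε t + 2 * lam * L t (vstar t)) := by
    intro t ht
    set S := Vt (t - 1) with hS
    have h1 := abs_le.mp (hproxy t ht (u t))
    have h2 := abs_le.mp (hproxy t ht (vstar t))
    have hg := hgreedy t ht (vstar t)
    have hLa := hLnn t ht (u t)
    have hLb := hLnn t ht (vstar t)
    have hm1 : η * L t (u t) ≤ lam * L t (u t) :=
      mul_le_mul_of_nonneg_right hlam hLa
    have hm2 : η * L t (vstar t) ≤ lam * L t (vstar t) :=
      mul_le_mul_of_nonneg_right hlam hLb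
    -- noisy greedy step bound
    have hΔ : f (insert (vstar t) S) - f S
        - (2 * ε t + 2 * lam * L t (vstar t)) ≤ f (insert (u t) S) - f S := by
      linarith [h1.1, h1.2, h2.1, h2.2]
    -- submodular bound: f Vopt - f S ≤ K * Δ*
    have hΔnn : 0 ≤ f (insert (vstar t) S) - f S :=
      sub_nonneg.mpr (hmono _ _ (Finset.subset_insert _ _))
    have hsumb := subadd_aux f hmono hsub S Vopt
    have hmono2 : f Vopt ≤ f (S ∪ Vopt) := hmono _ _ Finset.subset_union_right
    have hsum2 : ∑ v ∈ Vopt, (f (insert v S) - f S)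
        ≤ (Vopt.card : ℝ) * (f (insert (vstar t) S) - f S) := by
      have := Finset.sum_le_card_nsmul Vopt (fun v => f (insert v S) - f S)
        (f (insert (vstar t) S) - f S) (fun v _ => hstar t ht v)
      simpa [nsmul_eq_mul] using this
    have hcard : (Vopt.card : ℝ) * (f (insert (vstar t) S) - f S)
        ≤ (K:ℝ) * (f (insert (vstar t) S) - f S) := by
      have : (Vopt.card : ℝ) ≤ (K:ℝ) := by exact_mod_cast hopt
      exact mul_le_mul_of_nonneg_right this hΔnn
    have hdiv : (f Vopt - f S) / (K:ℝ) ≤ f (insert (vstar t) S) - f S := by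
      rw [div_le_iff₀ hKpos]; nlinarith
    have hexp : c * (f Vopt - f S) = (f Vopt - f S) - (f Vopt - f S) / (K:ℝ) := by
      rw [hc]; ring
    rw [hVstep t ht, ← hS]
    rw [hexp]
    linarith
  -- telescoped recurrence
  have hrec : ∀ n, n ≤ K → f Vopt - f (Vt n) ≤ c ^ n * (f Vopt - f (Vt 0))
      + ∑ t ∈ Finset.Icc 1 n, c ^ (n - t) * (2 * ε t + 2 * lam * L t (vstar t)) := by
    intro n
    induction n with
    | zero => simp
    | succ m ih =>
      intro hn
      have hm : m ≤ K := Nat.le_of_succ_le hn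
      have hmem : m + 1 ∈ Finset.Icc 1 K :=
        Finset.mem_Icc.mpr ⟨Nat.succ_le_succ (Nat.zero_le m), hn⟩
      have h1 := hstep (m + 1) hmem
      simp only [Nat.add_sub_cancel] at h1
      have h3 := mul_le_mul_of_nonneg_left (ih hm) hc0
      have hsum : ∑ t ∈ Finset.Icc 1 (m + 1),
          c ^ (m + 1 - t) * (2 * ε t + 2 * lam * L t (vstar t))
          = c * ∑ t ∈ Finset.Icc 1 m, c ^ (m - t) * (2 * ε t + 2 * lam * L t (vstar t))
            + (2 * ε (m+1) + 2 * lam * L (m+1) (vstar (m+1))) := by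
        rw [Finset.sum_Icc_succ_top (Nat.le_add_left 1 m), Finset.mul_sum]
        congr 1
        · apply Finset.sum_congr rfl
          intro t htm
          have ht : t ≤ m := (Finset.mem_Icc.mp htm).2
          have : m + 1 - t = (m - t) + 1 := by omega
          rw [this, pow_succ]; ring
        · simp
      have hpow : c ^ (m + 1) = c * c ^ m := by rw [pow_succ]; ring
      rw [hsum, hpow]
      calc f Vopt - f (Vt (m + 1))
          ≤ c * (f Vopt - f (Vt m)) + (2 * ε (m+1) + 2 * lam * L (m+1) (vstar (m+1))) := h1
        _ ≤ c * (c ^ m * (f Vopt - f (Vt 0))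
              + ∑ t ∈ Finset.Icc 1 m, c ^ (m - t) * (2 * ε t + 2 * lam * L t (vstar t)))
              + (2 * ε (m+1) + 2 * lam * L (m+1) (vstar (m+1))) := by linarith
        _ = c * c ^ m * (f Vopt - f (Vt 0))
              + (c * ∑ t ∈ Finset.Icc 1 m, c ^ (m - t) * (2 * ε t + 2 * lam * L t (vstar t))
                + (2 * ε (m+1) + 2 * lam * L (m+1) (vstar (m+1)))) := by ring
  have hmain := hrec K le_rfl
  rw [hV0, hnorm, sub_zero] at hmain
  have hopt0 : 0 ≤ f Vopt := by
    have := hmono ∅ Vopt (Finset.empty_subset _)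
    linarith [hnorm ▸ this]
  have hcK : c ^ K ≤ (Real.exp 1)⁻¹ := by
    have h1 : c ≤ Real.exp (-(1 / (K:ℝ))) := by
      have := Real.add_one_le_exp (-(1 / (K:ℝ)))
      rw [hc]; linarith
    have h2 : c ^ K ≤ (Real.exp (-(1 / (K:ℝ)))) ^ K := pow_le_pow_left₀ hc0 h1 K
    have h3 : (Real.exp (-(1 / (K:ℝ)))) ^ K = Real.exp ((K:ℝ) * (-(1 / (K:ℝ)))) := by
      rw [← Real.exp_nat_mul]
    have h4 : (K:ℝ) * (-(1 / (K:ℝ))) = -1 := by field_simp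
    rw [h3, h4, Real.exp_neg] at h2
    exact h2
  constructor
  · have : c ^ K * f Vopt ≤ (Real.exp 1)⁻¹ * f Vopt :=
      mul_le_mul_of_nonneg_right hcK hopt0
    linarith
  · apply Finset.sum_le_sum
    intro t ht
    have hp1 : c ^ (K - t) ≤ 1 := pow_le_one₀ hc0 hc1
    exact mul_le_of_le_one_left (henn t ht) hp1
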